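/- Let K₁, …, K_r ⊆ ℝ^n be nonempty compact convex sets with support functions f_i(w) = sup_{t ∈ K_i} ⟨w, t⟩, and let ε > 0. Then min_{w ∈ [−ε, ε]^n} ( Σ_{i=1}^r f_i(w) + (1/2)‖w‖₂² ) = sup_{(s₁, …, s_r) ∈ (ℝ^n)^r} ( − Σ_{i=1}^r ε · min_{t_i ∈ K_i} ‖s_i − t_i‖₁ − (1/2)‖ Σ_{i=1}^r s_i ‖₂² ), and the supremum is attained. -/

import Mathlib

noncomputable def stmt6cl (ε x : ℝ) : ℝ := max (-ε) (min ε x)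

lemma stmt6cl_cases {ε : ℝ} (hε : 0 < ε) (x : ℝ) :
    (x ≤ -ε ∧ stmt6cl ε x = -ε) ∨ (|x| ≤ ε ∧ stmt6cl ε x = x) ∨ (ε ≤ x ∧ stmt6cl ε x = ε) := by
  unfold stmt6cl
  rcases le_total x (-ε) with h | h
  · left; exact ⟨h, by rw [min_eq_right (by linarith), max_eq_left h]⟩
  · rcases le_total ε x with h2 | h2
    · right; right; exact ⟨h2, by rw [min_eq_left h2, max_eq_right (by linarith)]⟩
    · right; left; exact ⟨abs_le.2 ⟨by linarith, h2⟩, by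
        rw [min_eq_right h2, max_eq_right (by linarith)]⟩

lemma stmt6cl_abs_le {ε : ℝ} (hε : 0 < ε) (x : ℝ) : |stmt6cl ε x| ≤ ε := by
  rcases stmt6cl_cases hε x with ⟨h, he⟩ | ⟨h, he⟩ | ⟨h, he⟩ <;> rw [he, abs_le] <;>
    first
    | constructor <;> linarith
    | exact abs_le.1 h

/-- L1: per-coordinate min of quadratic over box. -/
lemma stmt6L1 {ε v a : ℝ} (hε : 0 < ε) (hv : |v| ≤ ε) :
    (-(stmt6cl ε a)) * a + (stmt6cl ε a)^2/2 ≤ v * a + v^2/2 := by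
  obtain ⟨hv1, hv2⟩ := abs_le.1 hv
  rcases stmt6cl_cases hε a with ⟨h, he⟩ | ⟨h, he⟩ | ⟨h, he⟩ <;> rw [he] <;>
    nlinarith [sq_nonneg (v + a), sq_nonneg (v + stmt6cl ε a)]

/-- L2': semiconcavity (reverse gradient inequality). -/
lemma stmt6L2 {ε : ℝ} (hε : 0 < ε) (a b : ℝ) :
    (-(stmt6cl ε a)) * a + (stmt6cl ε a)^2/2 + (-(stmt6cl ε a)) * (b - a) - (b-a)^2/2
      ≤ (-(stmt6cl ε b)) * b + (stmt6cl ε b)^2/2 := by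
  rcases stmt6cl_cases hε a with ⟨h, he⟩ | ⟨h, he⟩ | ⟨h, he⟩ <;>
  rcases stmt6cl_cases hε b with ⟨h', he'⟩ | ⟨h', he'⟩ | ⟨h', he'⟩ <;>
  rw [he, he'] <;>
  (try obtain ⟨h1, h2⟩ := abs_le.1 h) <;> (try obtain ⟨h1', h2'⟩ := abs_le.1 h') <;>
    nlinarith [sq_nonneg (a - b), sq_nonneg (a + b), sq_nonneg (a - b - 2*ε), sq_nonneg (a - b + 2*ε)]

/-- L3: dual value identity. -/
lemma stmt6L3 {ε : ℝ} (hε : 0 < ε) (a : ℝ) :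
    -ε * |a - stmt6cl ε a| - (stmt6cl ε a)^2/2 = (-(stmt6cl ε a)) * a + (stmt6cl ε a)^2/2 := by
  rcases stmt6cl_cases hε a with ⟨h, he⟩ | ⟨h, he⟩ | ⟨h, he⟩ <;> rw [he]
  · rw [abs_of_nonpos (by linarith)]; ring
  · simp; ring
  · rw [abs_of_nonneg (by linarith)]; ring

theorem stmt6 (n r : ℕ) (K : Fin r → Set (Fin n → ℝ))
    (hKne : ∀ i, (K i).Nonempty) (hKcomp : ∀ i, IsCompact (K i))
    (hKconv : ∀ i, Convex ℝ (K i))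
    (ε : ℝ) (hε : 0 < ε)
    (f : Fin r → (Fin n → ℝ) → ℝ)
    (hf : ∀ i (w : Fin n → ℝ), f i w = sSup {x : ℝ | ∃ t ∈ K i, x = ∑ j, w j * t j}) :
    ∃ p : ℝ,
      IsLeast {x : ℝ | ∃ w : Fin n → ℝ, (∀ j, |w j| ≤ ε) ∧
        x = (∑ i, f i w) + (1/2) * ∑ j, (w j)^2} p ∧
      IsGreatest {x : ℝ | ∃ s : Fin r → Fin n → ℝ,
        x = - (∑ i, ε * sInf {d : ℝ | ∃ t ∈ K i, d = ∑ j, |s i j - t j|})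
            - (1/2) * ∑ j, (∑ i, s i j)^2} p := by
  classical
  -- the Minkowski-sum set S
  set S : Set (Fin n → ℝ) :=
    {a | ∃ t : Fin r → Fin n → ℝ, (∀ i, t i ∈ K i) ∧ a = fun j => ∑ i, t i j} with hS
  have hSne : S.Nonempty :=
    ⟨_, fun i => (hKne i).choose, fun i => (hKne i).choose_spec, rfl⟩
  have hScomp : IsCompact S := by
    have heq : S = (fun t : Fin r → Fin n → ℝ => fun j => ∑ i, t i j) '' Set.pi Set.univ K := by
      ext a
      constructor
      · rintro ⟨t, ht, rfl⟩; exact ⟨t, fun i _ => ht i, rfl⟩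
      · rintro ⟨t, ht, rfl⟩; exact ⟨t, fun i => ht i (Set.mem_univ i), rfl⟩
    rw [heq]
    exact (isCompact_univ_pi hKcomp).image
      (continuous_pi fun j => continuous_finset_sum _ fun i _ =>
        (continuous_apply j).comp (continuous_apply i))
  set H : (Fin n → ℝ) → ℝ :=
    fun a => ∑ j, ((-(stmt6cl ε (a j))) * a j + (stmt6cl ε (a j))^2/2) with hH
  have hclcont : Continuous (stmt6cl ε) :=
    continuous_const.max (continuous_const.min continuous_id)
  have hHcont : Continuous H := by
    refine continuous_finset_sum _ fun j _ => Continuous.add ?_ ?_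
    · exact ((hclcont.comp (continuous_apply j)).neg).mul (continuous_apply j)
    · exact (((hclcont.comp (continuous_apply j)).pow 2)).div_const 2
  obtain ⟨A, hAS, hAmax⟩ := hScomp.exists_isMaxOn hSne hHcont.continuousOn
  obtain ⟨T, hT, hAT⟩ := hAS
  have hASmem : A ∈ S := ⟨T, hT, hAT⟩
  set W : Fin n → ℝ := fun j => -(stmt6cl ε (A j)) with hWdef
  have hWbox : ∀ j, |W j| ≤ ε := fun j => by
    rw [hWdef]; simpa [abs_neg] using stmt6cl_abs_le hε (A j)
  set p : ℝ := H A with hp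
  -- basic facts about f
  have himage : ∀ (i : Fin r) (w : Fin n → ℝ),
      {x : ℝ | ∃ t ∈ K i, x = ∑ j, w j * t j} = (fun t : Fin n → ℝ => ∑ j, w j * t j) '' K i := by
    intro i w; ext x; simp [Set.mem_image, eq_comm]
  have hfcont : ∀ (w : Fin n → ℝ), Continuous fun t : Fin n → ℝ => ∑ j, w j * t j :=
    fun w => continuous_finset_sum _ fun j _ => continuous_const.mul (continuous_apply j)
  have hf_ge : ∀ (i : Fin r) (w t : Fin n → ℝ), t ∈ K i → ∑ j, w j * t j ≤ f i w := by
    intro i w t ht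
    rw [hf, himage]
    exact le_csSup ((hKcomp i).image (hfcont w)).bddAbove ⟨t, ht, rfl⟩
  have hf_mem : ∀ (i : Fin r) (w : Fin n → ℝ), ∃ t ∈ K i, f i w = ∑ j, w j * t j := by
    intro i w
    have hm : f i w ∈ (fun t : Fin n → ℝ => ∑ j, w j * t j) '' K i := by
      rw [hf, himage]
      exact ((hKcomp i).image (hfcont w)).sSup_mem ((hKne i).image _)
    obtain ⟨t, ht, h⟩ := hm
    exact ⟨t, ht, h.symm⟩
  -- key first-order optimality inequality
  have hkey : ∀ a ∈ S, ∑ j, W j * (a j - A j) ≤ 0 := by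
    rintro a ⟨t, ht, ha⟩
    have haj : ∀ j, a j = ∑ i, t i j := fun j => by rw [ha]
    have hAj : ∀ j, A j = ∑ i, T i j := fun j => by rw [hAT]
    set P : ℝ := ∑ j, W j * (a j - A j) with hP
    set Q : ℝ := ∑ j, (a j - A j)^2 / 2 with hQ
    have hQ0 : 0 ≤ Q := Finset.sum_nonneg fun j _ => by positivity
    have hstep : ∀ τ : ℝ, 0 < τ → τ ≤ 1 → τ * P ≤ τ^2 * Q := by
      intro τ hτ0 hτ1
      have hmem : (fun j => (1 - τ) * A j + τ * a j) ∈ S := by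
        refine ⟨fun i => (1-τ) • T i + τ • t i, fun i =>
          hKconv i (hT i) (ht i) (by linarith) (le_of_lt hτ0) (by ring), ?_⟩
        funext j
        simp only [Pi.add_apply, Pi.smul_apply, smul_eq_mul]
        rw [haj j, hAj j, Finset.sum_add_distrib, ← Finset.mul_sum, ← Finset.mul_sum]
      have hmax := hAmax hmem
      have hlow : H A + τ * P - τ^2 * Q ≤ H (fun j => (1 - τ) * A j + τ * a j) := by
        have hexp : H A + τ * P - τ^2 * Q =
            ∑ j, ((-(stmt6cl ε (A j))) * A j + (stmt6cl ε (A j))^2/2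
              + (-(stmt6cl ε (A j))) * (((1 - τ) * A j + τ * a j) - A j)
              - (((1 - τ) * A j + τ * a j) - A j)^2/2) := by
          simp only [hH, hP, hQ, hWdef, Finset.mul_sum, ← Finset.sum_sub_distrib,
            ← Finset.sum_add_distrib]
          exact Finset.sum_congr rfl fun j _ => by ring
        rw [hexp, hH]
        exact Finset.sum_le_sum fun j _ =>
          stmt6L2 hε (A j) ((1 - τ) * A j + τ * a j)
      have : τ * P - τ^2 * Q ≤ 0 := by
        have := le_trans hlow hmax
        linarith
      linarith
    by_contra hPc
    push_neg at hPc
    rcases eq_or_lt_of_le hQ0 with hQe | hQp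
    · have := hstep 1 one_pos le_rfl
      rw [← hQe] at this
      nlinarith
    · set τ : ℝ := min 1 (P / (2 * Q)) with hτ
      have hτ0 : 0 < τ := lt_min one_pos (div_pos hPc (by linarith))
      have hτ1 : τ ≤ 1 := min_le_left _ _
      have hτ2 : τ ≤ P / (2 * Q) := min_le_right _ _
      have hs := hstep τ hτ0 hτ1
      have h2 : τ * (2 * Q) ≤ P := (le_div_iff₀ (by linarith)).1 hτ2
      nlinarith [mul_pos hτ0 hPc, mul_le_mul_of_nonneg_left h2 (le_of_lt hτ0)]
  -- sum of support functions at W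
  have hsumf : ∑ i, f i W = ∑ j, W j * A j := by
    apply le_antisymm
    · choose t' ht'K ht'eq using fun i => hf_mem i W
      have h1 : ∑ i, f i W = ∑ j, W j * (∑ i, t' i j) := by
        rw [Finset.sum_congr rfl fun i _ => ht'eq i, Finset.sum_comm]
        exact Finset.sum_congr rfl fun j _ => (Finset.mul_sum _ _ _).symm
      have hmem : (fun j => ∑ i, t' i j) ∈ S := ⟨t', ht'K, rfl⟩
      have h2 := hkey _ hmem
      rw [h1]
      have h3 : ∑ j, W j * (∑ i, t' i j) - ∑ j, W j * A j
          = ∑ j, W j * ((∑ i, t' i j) - A j) := by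
        rw [← Finset.sum_sub_distrib]
        exact Finset.sum_congr rfl fun j _ => by ring
      linarith [h3 ▸ h2]
    · have h1 : ∑ j, W j * A j = ∑ i, ∑ j, W j * T i j := by
        rw [Finset.sum_comm]
        refine Finset.sum_congr rfl fun j _ => ?_
        rw [hAT]
        exact Finset.mul_sum _ _ _
      rw [h1]
      exact Finset.sum_le_sum fun i _ => hf_ge i W (T i) (hT i)
  -- value of the primal at W equals p
  have hprimalW : (∑ i, f i W) + (1/2) * ∑ j, (W j)^2 = p := by
    rw [hsumf, hp, hH, Finset.mul_sum, ← Finset.sum_add_distrib]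
    refine Finset.sum_congr rfl fun j _ => ?_
    rw [hWdef]
    ring
  -- sInf facts
  have hDset : ∀ (i : Fin r) (s : Fin n → ℝ),
      {d : ℝ | ∃ t ∈ K i, d = ∑ j, |s j - t j|}.Nonempty := by
    intro i s
    exact ⟨_, (hKne i).choose, (hKne i).choose_spec, rfl⟩
  have hDlb : ∀ (i : Fin r) (s : Fin n → ℝ),
      ∀ d ∈ {d : ℝ | ∃ t ∈ K i, d = ∑ j, |s j - t j|}, (0:ℝ) ≤ d := by
    rintro i s d ⟨t, ht, rfl⟩
    exact Finset.sum_nonneg fun j _ => abs_nonneg _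
  have hDbdd : ∀ (i : Fin r) (s : Fin n → ℝ),
      BddBelow {d : ℝ | ∃ t ∈ K i, d = ∑ j, |s j - t j|} :=
    fun i s => ⟨0, fun d hd => hDlb i s d hd⟩
  have hD0 : ∀ (i : Fin r) (s : Fin n → ℝ),
      0 ≤ sInf {d : ℝ | ∃ t ∈ K i, d = ∑ j, |s j - t j|} :=
    fun i s => le_csInf (hDset i s) (hDlb i s)
  -- weak-duality key estimate per block
  have hblock : ∀ (i : Fin r) (s : Fin n → ℝ),
      (∑ j, W j * s j) - f i W ≤ ε * sInf {d : ℝ | ∃ t ∈ K i, d = ∑ j, |s j - t j|} := by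
    intro i s
    have hlb : ((∑ j, W j * s j) - f i W) / ε ≤
        sInf {d : ℝ | ∃ t ∈ K i, d = ∑ j, |s j - t j|} := by
      refine le_csInf (hDset i s) ?_
      rintro d ⟨t, ht, rfl⟩
      rw [div_le_iff₀ hε]
      have h1 : ∑ j, W j * s j - ∑ j, W j * t j ≤ ε * ∑ j, |s j - t j| := by
        rw [← Finset.sum_sub_distrib, Finset.mul_sum]
        refine Finset.sum_le_sum fun j _ => ?_
        have : W j * s j - W j * t j = W j * (s j - t j) := by ring
        rw [this]
        calc W j * (s j - t j) ≤ |W j * (s j - t j)| := le_abs_self _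
          _ = |W j| * |s j - t j| := abs_mul _ _
          _ ≤ ε * |s j - t j| := by
              exact mul_le_mul_of_nonneg_right (hWbox j) (abs_nonneg _)
      have h2 := hf_ge i W t ht
      calc (∑ j, W j * s j) - f i W ≤ (∑ j, W j * s j) - ∑ j, W j * t j := by linarith
        _ ≤ ε * ∑ j, |s j - t j| := h1
        _ = (∑ j, |s j - t j|) * ε := by ring
    calc (∑ j, W j * s j) - f i W = (((∑ j, W j * s j) - f i W) / ε) * ε := by
          field_simp
      _ ≤ sInf {d : ℝ | ∃ t ∈ K i, d = ∑ j, |s j - t j|} * ε := by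
          exact mul_le_mul_of_nonneg_right hlb (le_of_lt hε)
      _ = ε * sInf {d : ℝ | ∃ t ∈ K i, d = ∑ j, |s j - t j|} := mul_comm _ _
  -- weak duality
  have hweak : ∀ s : Fin r → Fin n → ℝ,
      - (∑ i, ε * sInf {d : ℝ | ∃ t ∈ K i, d = ∑ j, |s i j - t j|})
        - (1/2) * ∑ j, (∑ i, s i j)^2 ≤ p := by
    intro s
    have h1 : ∑ i, ((∑ j, W j * s i j) - f i W) ≤
        ∑ i, ε * sInf {d : ℝ | ∃ t ∈ K i, d = ∑ j, |s i j - t j|} :=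
      Finset.sum_le_sum fun i _ => hblock i (s i)
    have h2 : ∑ i, ((∑ j, W j * s i j) - f i W)
        = (∑ j, W j * (∑ i, s i j)) - ∑ i, f i W := by
      rw [Finset.sum_sub_distrib, Finset.sum_comm]
      congr 1
      exact Finset.sum_congr rfl fun j _ => (Finset.mul_sum _ _ _).symm
    have h3 : - (1/2) * ∑ j, (∑ i, s i j)^2 - ∑ j, W j * (∑ i, s i j)
        ≤ (1/2) * ∑ j, (W j)^2 := by
      have : 0 ≤ ∑ j, (W j + ∑ i, s i j)^2 :=
        Finset.sum_nonneg fun j _ => sq_nonneg _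
      have hexp : ∑ j, (W j + ∑ i, s i j)^2
          = ∑ j, (W j)^2 + 2 * ∑ j, W j * (∑ i, s i j) + ∑ j, (∑ i, s i j)^2 := by
        rw [Finset.mul_sum, ← Finset.sum_add_distrib, ← Finset.sum_add_distrib]
        exact Finset.sum_congr rfl fun j _ => by ring
      nlinarith [hexp ▸ this]
    rw [h2] at h1
    nlinarith [hprimalW]
  -- dual attainment
  have hdualmem : ∃ s : Fin r → Fin n → ℝ,
      p = - (∑ i, ε * sInf {d : ℝ | ∃ t ∈ K i, d = ∑ j, |s i j - t j|})
          - (1/2) * ∑ j, (∑ i, s i j)^2 := by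
    rcases Nat.eq_zero_or_pos r with hr | hr
    · subst hr
      refine ⟨fun i => i.elim0, ?_⟩
      have hA0 : A = fun _ => (0:ℝ) := by
        rw [hAT]; funext j; simp
      have hp0 : p = 0 := by
        rw [hp, hH, hA0]
        have hcl0 : stmt6cl ε 0 = 0 := by
          unfold stmt6cl
          rw [min_eq_right (le_of_lt hε), max_eq_right (by linarith)]
        simp [hcl0]
      rw [hp0]
      simp
    · set i₀ : Fin r := ⟨0, hr⟩ with hi₀
      set c : Fin n → ℝ := fun j => A j - stmt6cl ε (A j) with hc
      set s : Fin r → Fin n → ℝ :=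
        fun i => if i = i₀ then (fun j => T i₀ j - c j) else T i with hsdef
      refine ⟨s, ?_⟩
      have hsum : ∀ j, ∑ i, s i j = stmt6cl ε (A j) := by
        intro j
        have h1 : ∀ i, s i j = T i j - (if i = i₀ then c j else 0) := by
          intro i
          rw [hsdef]
          by_cases h : i = i₀
          · subst h; simp
          · simp [h]
        rw [Finset.sum_congr rfl fun i _ => h1 i, Finset.sum_sub_distrib,
          Finset.sum_ite_eq' Finset.univ i₀ (fun _ => c j)]
        simp only [Finset.mem_univ, if_true]
        have : ∑ i, T i j = A j := by rw [hAT]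
        rw [this, hc]
        ring
      -- D_i values
      have hDle : ∀ i : Fin r,
          sInf {d : ℝ | ∃ t ∈ K i, d = ∑ j, |s i j - t j|}
            ≤ (if i = i₀ then ∑ j, |c j| else 0) := by
        intro i
        by_cases h : i = i₀
        · subst h
          simp only [if_true]
          refine csInf_le (hDbdd i₀ (s i₀)) ⟨T i₀, hT i₀, ?_⟩
          refine Finset.sum_congr rfl fun j _ => ?_
          rw [hsdef]
          simp
        · simp only [h, if_false]
          refine csInf_le (hDbdd i (s i)) ⟨T i, hT i, ?_⟩
          rw [hsdef]
          simp [h]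
      have hge : p ≤ - (∑ i, ε * sInf {d : ℝ | ∃ t ∈ K i, d = ∑ j, |s i j - t j|})
          - (1/2) * ∑ j, (∑ i, s i j)^2 := by
        have h1 : ∑ i, ε * sInf {d : ℝ | ∃ t ∈ K i, d = ∑ j, |s i j - t j|}
            ≤ ε * ∑ j, |c j| := by
          calc ∑ i, ε * sInf {d : ℝ | ∃ t ∈ K i, d = ∑ j, |s i j - t j|}
              ≤ ∑ i, ε * (if i = i₀ then ∑ j, |c j| else 0) :=
                Finset.sum_le_sum fun i _ =>
                  mul_le_mul_of_nonneg_left (hDle i) (le_of_lt hε)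
            _ = ε * ∑ j, |c j| := by
                rw [← Finset.mul_sum, Finset.sum_ite_eq' Finset.univ i₀ (fun _ => ∑ j, |c j|)]
                simp
        have h2 : ∑ j, (∑ i, s i j)^2 = ∑ j, (stmt6cl ε (A j))^2 :=
          Finset.sum_congr rfl fun j _ => by rw [hsum j]
        have e1 : p = ∑ j, (-ε * |c j| - (stmt6cl ε (A j))^2/2) := by
          rw [hp, hH]
          refine Finset.sum_congr rfl fun j _ => ?_
          simp only [hc]
          exact (stmt6L3 hε (A j)).symm
        have e2 : ∑ j, (-ε * |c j| - (stmt6cl ε (A j))^2/2)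
            = (∑ j, (-ε * |c j|)) - ∑ j, ((stmt6cl ε (A j))^2/2) := Finset.sum_sub_distrib _ _
        have e3 : ∑ j, (-ε * |c j|) = -(ε * ∑ j, |c j|) := by
          rw [Finset.mul_sum, ← Finset.sum_neg_distrib]
          exact Finset.sum_congr rfl fun j _ => by ring
        have e4 : ∑ j, ((stmt6cl ε (A j))^2/2) = (1/2) * ∑ j, (stmt6cl ε (A j))^2 := by
          rw [Finset.mul_sum]
          exact Finset.sum_congr rfl fun j _ => by ring
        have h3 : p = - (ε * ∑ j, |c j|) - (1/2) * ∑ j, (stmt6cl ε (A j))^2 := by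
          rw [e1, e2, e3, e4]
        rw [h2, h3]
        linarith
      exact le_antisymm hge (hweak s)
  refine ⟨p, ⟨⟨W, hWbox, hprimalW.symm⟩, ?_⟩, ?_, ?_⟩
  · -- primal lower bound
    rintro x ⟨w, hwbox, rfl⟩
    have h1 : p ≤ ∑ j, (w j * A j + (w j)^2/2) := by
      rw [hp, hH]
      exact Finset.sum_le_sum fun j _ => stmt6L1 hε (hwbox j)
    have h2 : ∑ j, (w j * A j + (w j)^2/2)
        = (∑ i, ∑ j, w j * T i j) + (1/2) * ∑ j, (w j)^2 := by
      rw [Finset.sum_add_distrib, Finset.mul_sum, Finset.sum_comm]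
      congr 1
      · refine Finset.sum_congr rfl fun j _ => ?_
        rw [hAT, Finset.mul_sum]
      · exact Finset.sum_congr rfl fun j _ => by ring
    have h3 : ∑ i, ∑ j, w j * T i j ≤ ∑ i, f i w :=
      Finset.sum_le_sum fun i _ => hf_ge i w (T i) (hT i)
    rw [h2] at h1
    linarith
  · obtain ⟨s, hs⟩ := hdualmem
    exact ⟨s, hs⟩
  · rintro x ⟨s, rfl⟩
    exact hweak s
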